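/- If f is tie-free, then for priors π_1 ≥ π_2 ≥ … ≥ π_m in [0,1] and nonnegative weights z_ij (1 ≤ i < j ≤ m), the U^m AUC risk is an affine function of the PN-AUC risk: R_{U^m}(f) = Σ_{1≤i<j≤m} z_ij·R_ij(f) = s·R_PN(f) + C, where s = Σ_{1≤i<j≤m} z_ij·(π_i − π_j) and C = Σ_{1≤i<j≤m} z_ij·C_ij with C_ij = (π_i·π_j + (1−π_i)·(1−π_j))/2 + (1−π_i)·π_j, neither s nor C depending on f. -/

import Mathlib

open MeasureTheory

/-- The ranking risk `R(μ,ν)(f) = (μ ⊗ ν){(x,x') : f(x) < f(x')}` (as a real number). -/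
noncomputable def rankRisk {X : Type*} [MeasurableSpace X]
    (μ ν : Measure X) (f : X → ℝ) : ℝ :=
  ((μ.prod ν) {p : X × X | f p.1 < f p.2}).toReal

/-- The mixture `p_π = π·p_P + (1−π)·p_N`. -/
noncomputable def mix {X : Type*} [MeasurableSpace X]
    (pP pN : Measure X) (π : ℝ) : Measure X :=
  ENNReal.ofReal π • pP + ENNReal.ofReal (1 - π) • pN

/-- `f` is tie-free: ties have probability zero under every product of the
class-conditional distributions. -/
def TieFree {X : Type*} [MeasurableSpace X] (pP pN : Measure X) (f : X → ℝ) : Prop :=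
  ∀ μ ∈ ({pP, pN} : Set (Measure X)), ∀ ν ∈ ({pP, pN} : Set (Measure X)),
    (μ.prod ν) {p : X × X | f p.1 = f p.2} = 0

section Aux

variable {X : Type*} [MeasurableSpace X]

lemma set_lt_measurable (f : X → ℝ) (hf : Measurable f) :
    MeasurableSet {p : X × X | f p.1 < f p.2} :=
  measurableSet_lt (hf.comp measurable_fst) (hf.comp measurable_snd)

lemma smul_prod_apply (c : ENNReal) (μ ν : Measure X) [SFinite μ] [SFinite ν]
    {s : Set (X × X)} (hs : MeasurableSet s) :
    ((c • μ).prod ν) s = c * (μ.prod ν) s := by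
  rw [Measure.prod_apply hs, Measure.prod_apply hs, lintegral_smul_measure, smul_eq_mul]

lemma prod_smul_apply (c : ENNReal) (μ ν : Measure X) [SFinite μ] [SFinite ν]
    {s : Set (X × X)} (hs : MeasurableSet s) :
    (μ.prod (c • ν)) s = c * (μ.prod ν) s := by
  rw [Measure.prod_apply hs, Measure.prod_apply hs,
    ← lintegral_const_mul _ (measurable_measure_prodMk_left hs)]
  simp [Measure.smul_apply]

lemma rank_add_swap (μ ν : Measure X) [IsProbabilityMeasure μ] [IsProbabilityMeasure ν]
    (f : X → ℝ) (hf : Measurable f)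
    (h : (μ.prod ν) {p : X × X | f p.1 = f p.2} = 0) :
    (μ.prod ν) {p : X × X | f p.1 < f p.2} + (ν.prod μ) {p : X × X | f p.1 < f p.2} = 1 := by
  have hswap : (ν.prod μ) {p : X × X | f p.1 < f p.2}
      = (μ.prod ν) {p : X × X | f p.2 < f p.1} := by
    rw [← Measure.prod_swap, Measure.map_apply measurable_swap (set_lt_measurable f hf)]
    rfl
  rw [hswap]
  set A : Set (X × X) := {p : X × X | f p.1 < f p.2} with hA
  set B : Set (X × X) := {p : X × X | f p.2 < f p.1} with hB
  have hd : Disjoint A B := by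
    rw [Set.disjoint_left]
    intro p h1 h2
    simp only [hA, hB, Set.mem_setOf_eq] at h1 h2
    exact absurd h2 (not_lt.2 h1.le)
  rw [← measure_union hd (measurableSet_lt (hf.comp measurable_snd) (hf.comp measurable_fst))]
  have hcompl : (A ∪ B)ᶜ = {p : X × X | f p.1 = f p.2} := by
    ext p
    simp only [hA, hB, Set.mem_compl_iff, Set.mem_union, Set.mem_setOf_eq, not_or, not_lt]
    constructor
    · rintro ⟨h1, h2⟩; exact le_antisymm h2 h1
    · intro h; exact ⟨h.ge, h.le⟩
  have hae : ((A ∪ B : Set (X × X))) =ᵐ[μ.prod ν] (Set.univ : Set (X × X)) := by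
    rw [MeasureTheory.ae_eq_univ, hcompl]; exact h
  rw [measure_congr hae, measure_univ]

lemma rank_self (μ : Measure X) [IsProbabilityMeasure μ]
    (f : X → ℝ) (hf : Measurable f)
    (h : (μ.prod μ) {p : X × X | f p.1 = f p.2} = 0) :
    ((μ.prod μ) {p : X × X | f p.1 < f p.2}).toReal = 1 / 2 := by
  have h1 := rank_add_swap μ μ f hf h
  have hne : (μ.prod μ) {p : X × X | f p.1 < f p.2} ≠ ⊤ := measure_ne_top _ _
  have := congrArg ENNReal.toReal h1
  rw [ENNReal.toReal_add hne hne, ENNReal.toReal_one] at this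
  linarith

lemma rank_compl (μ ν : Measure X) [IsProbabilityMeasure μ] [IsProbabilityMeasure ν]
    (f : X → ℝ) (hf : Measurable f)
    (h : (μ.prod ν) {p : X × X | f p.1 = f p.2} = 0) :
    ((ν.prod μ) {p : X × X | f p.1 < f p.2}).toReal
      = 1 - ((μ.prod ν) {p : X × X | f p.1 < f p.2}).toReal := by
  have h1 := rank_add_swap μ ν f hf h
  have := congrArg ENNReal.toReal h1
  rw [ENNReal.toReal_add (measure_ne_top _ _) (measure_ne_top _ _), ENNReal.toReal_one] at this
  linarith

lemma mix_rank (pP pN : Measure X) [IsProbabilityMeasure pP] [IsProbabilityMeasure pN]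
    (f : X → ℝ) (hf : Measurable f) (htf : TieFree pP pN f)
    (a b : ℝ) (ha : a ∈ Set.Icc (0:ℝ) 1) (hb : b ∈ Set.Icc (0:ℝ) 1) :
    rankRisk (mix pP pN a) (mix pP pN b) f =
      (a - b) * rankRisk pP pN f + ((a * b + (1 - a) * (1 - b)) / 2 + (1 - a) * b) := by
  set S := {p : X × X | f p.1 < f p.2} with hS
  have hSm : MeasurableSet S := set_lt_measurable f hf
  have hPP := htf pP (by simp) pP (by simp)
  have hPN := htf pP (by simp) pN (by simp)
  have hNN := htf pN (by simp) pN (by simp)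
  have expand : ((mix pP pN a).prod (mix pP pN b)) S
      = ENNReal.ofReal a * (ENNReal.ofReal b * pP.prod pP S)
        + ENNReal.ofReal a * (ENNReal.ofReal (1 - b) * pP.prod pN S)
        + (ENNReal.ofReal (1 - a) * (ENNReal.ofReal b * pN.prod pP S)
        + ENNReal.ofReal (1 - a) * (ENNReal.ofReal (1 - b) * pN.prod pN S)) := by
    rw [mix, mix, Measure.add_prod, Measure.add_apply,
      smul_prod_apply _ _ _ hSm, smul_prod_apply _ _ _ hSm,
      Measure.prod_add, Measure.add_apply, Measure.prod_add, Measure.add_apply,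
      prod_smul_apply _ _ _ hSm, prod_smul_apply _ _ _ hSm,
      prod_smul_apply _ _ _ hSm, prod_smul_apply _ _ _ hSm]
    ring
  have hne : ∀ (μ ν : Measure X) [IsProbabilityMeasure μ] [IsProbabilityMeasure ν] (c d : ENNReal)
      (hc : c ≠ ⊤) (hd : d ≠ ⊤), c * (d * μ.prod ν S) ≠ ⊤ := fun μ ν _ _ c d hc hd =>
    ENNReal.mul_ne_top hc (ENNReal.mul_ne_top hd (measure_ne_top _ _))
  rw [rankRisk, expand]
  rw [ENNReal.toReal_add, ENNReal.toReal_add, ENNReal.toReal_add]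
  · simp only [ENNReal.toReal_mul, ENNReal.toReal_ofReal ha.1, ENNReal.toReal_ofReal hb.1,
      ENNReal.toReal_ofReal (by linarith [ha.2] : (0:ℝ) ≤ 1 - a),
      ENNReal.toReal_ofReal (by linarith [hb.2] : (0:ℝ) ≤ 1 - b)]
    rw [rank_self pP f hf hPP, rank_self pN f hf hNN, rank_compl pP pN f hf hPN]
    rw [rankRisk]
    ring
  all_goals first
    | exact hne _ _ _ _ ENNReal.ofReal_ne_top ENNReal.ofReal_ne_top
    | exact ENNReal.add_ne_top.2 ⟨hne _ _ _ _ ENNReal.ofReal_ne_top ENNReal.ofReal_ne_top,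
        hne _ _ _ _ ENNReal.ofReal_ne_top ENNReal.ofReal_ne_top⟩

end Aux

/-- for tie-free `f`, weakly decreasing priors and nonnegative weights,
the U^m AUC risk `Σ_{i<j} z_ij·R_ij(f)` is an affine function `s·R_PN(f) + C` of the
PN-AUC risk, with `s = Σ_{i<j} z_ij·(π_i − π_j)` and `C = Σ_{i<j} z_ij·C_ij`. -/
theorem um_risk_affine_in_pn_risk {X : Type*} [MeasurableSpace X]
    (pP pN : Measure X) [IsProbabilityMeasure pP] [IsProbabilityMeasure pN]
    (f : X → ℝ) (hf : Measurable f) (htf : TieFree pP pN f)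
    (m : ℕ) (π : Fin m → ℝ) (hπ : ∀ i, π i ∈ Set.Icc (0 : ℝ) 1)
    (hdec : Antitone π)
    (z : Fin m → Fin m → ℝ) (hz : ∀ i j, i < j → 0 ≤ z i j) :
    ∑ i : Fin m, ∑ j ∈ Finset.Ioi i,
        z i j * rankRisk (mix pP pN (π i)) (mix pP pN (π j)) f =
      (∑ i : Fin m, ∑ j ∈ Finset.Ioi i, z i j * (π i - π j)) * rankRisk pP pN f
      + ∑ i : Fin m, ∑ j ∈ Finset.Ioi i,
          z i j * ((π i * π j + (1 - π i) * (1 - π j)) / 2 + (1 - π i) * π j) := by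
  have key : ∀ i : Fin m, ∀ j ∈ Finset.Ioi i,
      z i j * rankRisk (mix pP pN (π i)) (mix pP pN (π j)) f
        = z i j * (π i - π j) * rankRisk pP pN f
          + z i j * ((π i * π j + (1 - π i) * (1 - π j)) / 2 + (1 - π i) * π j) := by
    intro i j _
    rw [mix_rank pP pN f hf htf (π i) (π j) (hπ i) (hπ j)]
    ring
  calc ∑ i : Fin m, ∑ j ∈ Finset.Ioi i,
        z i j * rankRisk (mix pP pN (π i)) (mix pP pN (π j)) f
      = ∑ i : Fin m, ∑ j ∈ Finset.Ioi i,
          (z i j * (π i - π j) * rankRisk pP pN f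
            + z i j * ((π i * π j + (1 - π i) * (1 - π j)) / 2 + (1 - π i) * π j)) := by
        exact Finset.sum_congr rfl fun i _ => Finset.sum_congr rfl (key i)
    _ = _ := by
        simp only [Finset.sum_add_distrib, Finset.sum_mul]
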